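/- Let Y₁(x,v,a) = (0,0,2v), Y₂(x,v,a) = (0,v,2a), Y₃(x,v,a) = (v,a,3a²/(2v)) on ℝ³, and let Y_α^[2](p₁,p₂) := (Y_α(p₁), Y_α(p₂)) denote their diagonal prolongations to ℝ⁶, with coordinates (x₁,v₁,a₁,x₂,v₂,a₂). The function F₃(x₁,v₁,a₁,x₂,v₂,a₂) = x₁ + x₂ − 2v₁v₂(v₁ − v₂)/(a₁v₂ − v₁a₂) satisfies (fderiv ℝ F₃ p)(Y_α^[2](p)) = 0 for α = 1,2,3 at every point p with v₁ ≠ 0, v₂ ≠ 0 and a₁v₂ − v₁a₂ ≠ 0. Hence F₃ is a t-independent constant of motion of the diagonal prolongation of the Schwarzian system X_t = Y₃ + b₁(t)Y₁. -/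

import Mathlib

/-- Diagonal prolongations to `ℝ⁶` of the Vessiot--Guldberg vector fields of
the Schwarzian equation; coordinates
`(x₁,v₁,a₁,x₂,v₂,a₂) = (p 0, p 1, p 2, p 3, p 4, p 5)`. -/
noncomputable def schwarzY₁p : (Fin 6 → ℝ) → (Fin 6 → ℝ) :=
  fun p => ![0, 0, 2 * p 1, 0, 0, 2 * p 4]

noncomputable def schwarzY₂p : (Fin 6 → ℝ) → (Fin 6 → ℝ) :=
  fun p => ![0, p 1, 2 * p 2, 0, p 4, 2 * p 5]

noncomputable def schwarzY₃p : (Fin 6 → ℝ) → (Fin 6 → ℝ) :=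
  fun p => ![p 1, p 2, 3 * (p 2) ^ 2 / (2 * p 1),
             p 4, p 5, 3 * (p 5) ^ 2 / (2 * p 4)]

/-- `F₃ = x₁ + x₂ − 2v₁v₂(v₁ − v₂)/(a₁v₂ − v₁a₂)`. -/
noncomputable def schwarzF₃ : (Fin 6 → ℝ) → ℝ :=
  fun p => p 0 + p 3 - 2 * p 1 * p 4 * (p 1 - p 4) / (p 2 * p 4 - p 1 * p 5)

lemma vec6_apply (a b c d e f : ℝ) :
    (![a,b,c,d,e,f] : Fin 6 → ℝ) 0 = a ∧ (![a,b,c,d,e,f] : Fin 6 → ℝ) 1 = b ∧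
    (![a,b,c,d,e,f] : Fin 6 → ℝ) 2 = c ∧ (![a,b,c,d,e,f] : Fin 6 → ℝ) 3 = d ∧
    (![a,b,c,d,e,f] : Fin 6 → ℝ) 4 = e ∧ (![a,b,c,d,e,f] : Fin 6 → ℝ) 5 = f :=
  ⟨rfl, rfl, rfl, rfl, rfl, rfl⟩

set_option maxHeartbeats 1000000 in
/-- `F₃` is annihilated by the diagonal prolongations of
`Y₁, Y₂, Y₃` wherever `v₁ ≠ 0`, `v₂ ≠ 0` and `a₁v₂ − v₁a₂ ≠ 0`; hence it is
a t-independent constant of motion of the prolonged Schwarzian system. -/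
theorem schwarzian_constant_of_motion_F3 :
    ∀ p : Fin 6 → ℝ, p 1 ≠ 0 → p 4 ≠ 0 → p 2 * p 4 - p 1 * p 5 ≠ 0 →
      fderiv ℝ schwarzF₃ p (schwarzY₁p p) = 0 ∧
      fderiv ℝ schwarzF₃ p (schwarzY₂p p) = 0 ∧
      fderiv ℝ schwarzF₃ p (schwarzY₃p p) = 0 := by
  intro p h1 h4 hD
  have h : ∀ i : Fin 6, HasFDerivAt (fun q : Fin 6 → ℝ => q i)
      (ContinuousLinearMap.proj i : (Fin 6 → ℝ) →L[ℝ] ℝ) p := fun i =>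
    (ContinuousLinearMap.proj i : (Fin 6 → ℝ) →L[ℝ] ℝ).hasFDerivAt
  have hN := (((h 1).const_mul 2).mul (h 4)).mul ((h 1).sub (h 4))
  have hDen := ((h 2).mul (h 4)).sub ((h 1).mul (h 5))
  have hInv' := (hasFDerivAt_inv' (𝕜 := ℝ) (R := ℝ) hD).comp p hDen
  have hInv : HasFDerivAt (fun q : Fin 6 → ℝ => (q 2 * q 4 - q 1 * q 5)⁻¹) _ p := hInv'
  have hF := ((h 0).add (h 3)).sub (hN.mul hInv)
  have heq : schwarzF₃ = fun q : Fin 6 → ℝ =>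
      q 0 + q 3 - 2 * q 1 * q 4 * (q 1 - q 4) * (q 2 * q 4 - q 1 * q 5)⁻¹ := by
    funext q; simp [schwarzF₃, div_eq_mul_inv]
  rw [heq, show fderiv ℝ (fun q : Fin 6 → ℝ =>
      q 0 + q 3 - 2 * q 1 * q 4 * (q 1 - q 4) * (q 2 * q 4 - q 1 * q 5)⁻¹) p = _ from hF.fderiv]
  have hD' : p 4 * p 2 - p 1 * p 5 ≠ 0 := by rwa [mul_comm (p 4)]
  refine ⟨?_, ?_, ?_⟩ <;>
  · simp only [schwarzY₁p, schwarzY₂p, schwarzY₃p,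
      ContinuousLinearMap.sub_apply, ContinuousLinearMap.add_apply,
      ContinuousLinearMap.smul_apply, ContinuousLinearMap.comp_apply,
      ContinuousLinearMap.neg_apply, ContinuousLinearMap.mulLeftRight_apply,
      ContinuousLinearMap.proj_apply, smul_eq_mul, Pi.mul_apply, Pi.sub_apply, Pi.add_apply,
      (vec6_apply _ _ _ _ _ _).1, (vec6_apply _ _ _ _ _ _).2.1,
      (vec6_apply _ _ _ _ _ _).2.2.1, (vec6_apply _ _ _ _ _ _).2.2.2.1,
      (vec6_apply _ _ _ _ _ _).2.2.2.2.1, (vec6_apply _ _ _ _ _ _).2.2.2.2.2]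
    field_simp
    ring
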